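/- Fix h ∈ ℝ, J > 0, η ≥ 0, u ∈ ℝ and an integer N ≥ 1. Let S_N be the number of monomers, distributed according to the Gibbs measure μ_N of the IMD model, and let W be a Gaussian random variable with law 𝒩(0, (2J)^{−1}) independent of S_N. Then the real random variable W/N^{1/2−η} + (S_N − N·u)/N^{1−η} has law absolutely continuous with respect to Lebesgue measure, with density x ↦ C_N·exp(N·F_N(x/N^η + u)), where C_N^{−1} = ∫_ℝ exp(N·F_N(x/N^η + u)) dx. -/

import Mathlib

open MeasureTheory Filter Real

noncomputable section

open scoped ENNReal NNReal

namespace IMDAux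

variable {α β : Type*} [MeasurableSpace α] [MeasurableSpace β]

lemma sfinite_finsetSum {ι : Type*} (s : Finset ι) (μ : ι → Measure α)
    (hμ : ∀ i, SFinite (μ i)) : SFinite (∑ i ∈ s, μ i) := by
  classical
  induction s using Finset.induction_on with
  | empty => simpa using inferInstanceAs (SFinite (0 : Measure α))
  | @insert a t ha ih =>
    rw [Finset.sum_insert ha]
    haveI := ih
    haveI := hμ a
    infer_instance

lemma prod_smul_right (μ : Measure α) [SFinite μ] (ν : Measure β) [SFinite ν] (c : ℝ≥0∞) :
    μ.prod (c • ν) = c • μ.prod ν := by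
  ext A hA
  simp only [Measure.prod_apply hA, Measure.smul_apply, smul_eq_mul]
  rw [lintegral_const_mul _ (measurable_measure_prodMk_left hA)]

lemma prod_finsetSum (μ : Measure α) [SFinite μ] {ι : Type*} (s : Finset ι)
    (ν : ι → Measure β) (hν : ∀ i, SFinite (ν i)) :
    μ.prod (∑ i ∈ s, ν i) = ∑ i ∈ s, μ.prod (ν i) := by
  classical
  induction s using Finset.induction_on with
  | empty => simp
  | @insert a t ha ih =>
    rw [Finset.sum_insert ha, Finset.sum_insert ha, ← ih]
    haveI := sfinite_finsetSum t ν hν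
    haveI := hν a
    exact Measure.prod_add _

lemma map_finsetSum {ι : Type*} (s : Finset ι) (μ : ι → Measure α) {f : α → β}
    (hf : Measurable f) :
    Measure.map f (∑ i ∈ s, μ i) = ∑ i ∈ s, Measure.map f (μ i) := by
  classical
  induction s using Finset.induction_on with
  | empty => simp
  | @insert a t ha ih => rw [Finset.sum_insert ha, Finset.sum_insert ha, Measure.map_add _ _ hf, ih]

lemma finsetSum_smul_withDensity (μ : Measure α) {ι : Type*} (s : Finset ι)
    (c : ι → ℝ≥0∞) (f : ι → α → ℝ≥0∞) (hf : ∀ i, Measurable (f i)) :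
    ∑ i ∈ s, c i • μ.withDensity (f i) = μ.withDensity (fun x => ∑ i ∈ s, c i * f i x) := by
  ext A hA
  rw [Measure.finset_sum_apply, withDensity_apply _ hA,
    lintegral_finset_sum s (fun i _ => (hf i).const_mul (c i))]
  refine Finset.sum_congr rfl fun i _ => ?_
  rw [Measure.smul_apply, smul_eq_mul, withDensity_apply _ hA,
    lintegral_const_mul _ (hf i)]

end IMDAux

/-- A dimer configuration on the complete graph `K_N`: a set of non-loop edges
that are pairwise non-incident (a matching). -/
def IsDimerConfig (N : ℕ) (D : Finset (Sym2 (Fin N))) : Prop :=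
  (∀ e ∈ D, ¬ e.IsDiag) ∧
  ∀ e ∈ D, ∀ f ∈ D, e ≠ f → ∀ v : Fin N, ¬(v ∈ e ∧ v ∈ f)

open Classical in
/-- The configuration space `𝒟_N` of all dimer configurations on `K_N`. -/
noncomputable def dimerConfigs (N : ℕ) : Finset (Finset (Sym2 (Fin N))) :=
  Finset.univ.filter (fun D => IsDimerConfig N D)

/-- The number of monomers `S_N(D) = N - 2|D|` (as a real number). -/
def monomerCount (N : ℕ) (D : Finset (Sym2 (Fin N))) : ℝ := (N : ℝ) - 2 * D.card

/-- The monomer density `m_N(D) = S_N(D)/N`. -/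
def monomerDensity (N : ℕ) (D : Finset (Sym2 (Fin N))) : ℝ := monomerCount N D / N

/-- `g(h) = (e^h/2)(√(e^{2h}+4) − e^h)`. -/
def gFun (h : ℝ) : ℝ := Real.exp h / 2 * (Real.sqrt (Real.exp (2*h) + 4) - Real.exp h)

/-- `p⁰(h) = −(1−g(h))/2 − (1/2)·log(1−g(h))`. -/
def p0 (h : ℝ) : ℝ := -(1 - gFun h)/2 - (1/2) * Real.log (1 - gFun h)

/-- Variational pressure `p̃(m) = −Jm² + p⁰((2m−1)J + h)`. -/
def ptilde (h J m : ℝ) : ℝ := -J * m^2 + p0 ((2*m - 1) * J + h)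

/-- Pure hard-core partition function `Z_N⁰(a) = Σ_D N^{−|D|} e^{a·S_N(D)}`. -/
def Z0 (N : ℕ) (a : ℝ) : ℝ :=
  ∑ D ∈ dimerConfigs N, (N : ℝ) ^ (-(D.card : ℤ)) * Real.exp (a * monomerCount N D)

/-- Pure hard-core pressure density `p_N⁰(a) = (1/N) log Z_N⁰(a)`. -/
def p0N (N : ℕ) (a : ℝ) : ℝ := (1 / (N : ℝ)) * Real.log (Z0 N a)

/-- Minus the IMD Hamiltonian: `−H_N(D) = N((h−J)m_N(D) + J m_N(D)²)`. -/
def negH (N : ℕ) (h J : ℝ) (D : Finset (Sym2 (Fin N))) : ℝ :=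
  (N : ℝ) * ((h - J) * monomerDensity N D + J * (monomerDensity N D)^2)

/-- The IMD partition function `Z_N = Σ_D N^{−|D|} e^{−H_N(D)}`. -/
def ZIMD (N : ℕ) (h J : ℝ) : ℝ :=
  ∑ D ∈ dimerConfigs N, (N : ℝ) ^ (-(D.card : ℤ)) * Real.exp (negH N h J D)

/-- The IMD pressure density `p_N = (1/N) log Z_N`. -/
def pIMD (N : ℕ) (h J : ℝ) : ℝ := (1 / (N : ℝ)) * Real.log (ZIMD N h J)

/-- Expectation of an observable `f` under the IMD Gibbs measure `μ_N`. -/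
def gibbsExp (N : ℕ) (h J : ℝ) (f : Finset (Sym2 (Fin N)) → ℝ) : ℝ :=
  (∑ D ∈ dimerConfigs N, (N : ℝ) ^ (-(D.card : ℤ)) * Real.exp (negH N h J D) * f D)
    / ZIMD N h J

/-- `F_N(x) = −Jx² + p_N⁰(2Jx + h − J)`. -/
def FN (h J : ℝ) (N : ℕ) (x : ℝ) : ℝ := -J * x^2 + p0N N (2*J*x + h - J)


/-- the law of `W/N^{1/2−η} + (S_N − Nu)/N^{1−η}`, where `S_N` has
the IMD Gibbs law and `W ∼ 𝒩(0,(2J)⁻¹)` is independent of `S_N`, has density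
`x ↦ C_N · exp(N·F_N(x/N^η + u))` with respect to Lebesgue measure. -/
theorem gibbs_gaussian_convolution_density (h J : ℝ) (hJ : 0 < J) (η u : ℝ)
    (hη : 0 ≤ η) (N : ℕ) (hN : 1 ≤ N) (CN : ℝ)
    (hCN : CN = (∫ x : ℝ, Real.exp ((N : ℝ) * FN h J N (x / (N : ℝ) ^ η + u)))⁻¹) :
    Measure.map
        (fun p : ℝ × ℝ =>
          p.1 / (N : ℝ) ^ ((1:ℝ)/2 - η) + (p.2 - (N : ℝ) * u) / (N : ℝ) ^ ((1:ℝ) - η))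
        ((ProbabilityTheory.gaussianReal 0 (Real.toNNReal (2*J)⁻¹)).prod
          (∑ D ∈ dimerConfigs N,
            ENNReal.ofReal
                ((N : ℝ) ^ (-(D.card : ℤ)) * Real.exp (negH N h J D) / ZIMD N h J) •
              Measure.dirac (monomerCount N D)))
      =
      volume.withDensity
        (fun x : ℝ => ENNReal.ofReal (CN * Real.exp ((N : ℝ) * FN h J N (x / (N : ℝ) ^ η + u)))) := by
  classical
  have hNpos : (0:ℝ) < (N:ℝ) := by exact_mod_cast Nat.pos_of_ne_zero (by omega)
  have hN0 : (N:ℝ) ≠ 0 := hNpos.ne'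
  set a : ℝ := (N : ℝ) ^ ((1:ℝ)/2 - η) with ha_def
  set b : ℝ := (N : ℝ) ^ ((1:ℝ) - η) with hb_def
  set e : ℝ := (N : ℝ) ^ η with he_def
  have ha : 0 < a := Real.rpow_pos_of_pos hNpos _
  have hb : 0 < b := Real.rpow_pos_of_pos hNpos _
  have he : 0 < e := Real.rpow_pos_of_pos hNpos _
  have heb : e * b = (N : ℝ) := by
    rw [he_def, hb_def, ← Real.rpow_add hNpos, show η + ((1:ℝ) - η) = 1 by ring, Real.rpow_one]
  have hea : e ^ 2 * a ^ 2 = (N : ℝ) := by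
    have h1 : e * a = (N : ℝ) ^ ((1:ℝ)/2) := by
      rw [he_def, ha_def, ← Real.rpow_add hNpos, show η + ((1:ℝ)/2 - η) = 1/2 by ring]
    calc e ^ 2 * a ^ 2 = (e * a) * (e * a) := by ring
      _ = (N:ℝ) ^ ((1:ℝ)/2) * (N:ℝ) ^ ((1:ℝ)/2) := by rw [h1]
      _ = (N:ℝ) := by
          rw [← Real.rpow_add hNpos, show (1:ℝ)/2 + 1/2 = 1 by ring, Real.rpow_one]
  set ZN : ℝ := ZIMD N h J with hZN_def
  have hempty : (∅ : Finset (Sym2 (Fin N))) ∈ dimerConfigs N := by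
    simp [dimerConfigs, IsDimerConfig]
  have hZNpos : 0 < ZN := by
    rw [hZN_def, ZIMD]
    exact Finset.sum_pos (fun D _ => mul_pos (zpow_pos hNpos _) (Real.exp_pos _)) ⟨∅, hempty⟩
  have hZ0pos : ∀ t : ℝ, 0 < Z0 N t := fun t => by
    rw [Z0]
    exact Finset.sum_pos (fun D _ => mul_pos (zpow_pos hNpos _) (Real.exp_pos _)) ⟨∅, hempty⟩
  have hwnn : ∀ D : Finset (Sym2 (Fin N)),
      0 ≤ (N:ℝ) ^ (-(D.card : ℤ)) * Real.exp (negH N h J D) / ZN := fun D =>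
    div_nonneg (mul_nonneg (zpow_nonneg hNpos.le _) (Real.exp_pos _).le) hZNpos.le
  have hexpFN : ∀ m : ℝ, Real.exp ((N:ℝ) * FN h J N m)
      = Real.exp (-(J*(N:ℝ))*m^2) * Z0 N (2*J*m + h - J) := by
    intro m
    have h1 : (N:ℝ) * FN h J N m
        = -(J*(N:ℝ))*m^2 + Real.log (Z0 N (2*J*m + h - J)) := by
      rw [FN, p0N]
      field_simp
    rw [h1, Real.exp_add, Real.exp_log (hZ0pos _)]
  set v' : ℝ≥0 := Real.toNNReal ((2*J*a^2)⁻¹) with hv'_def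
  have hv'coe : (v' : ℝ) = (2*J*a^2)⁻¹ := Real.coe_toNNReal _ (by positivity)
  have hv'pos : (0:ℝ) < (v' : ℝ) := by rw [hv'coe]; positivity
  have hv'ne : v' ≠ 0 := by
    intro h0
    rw [h0] at hv'pos
    simp at hv'pos
  set K : ℝ := (Real.sqrt (2*π*(v':ℝ)))⁻¹ / ZN with hK_def
  have hKpos : 0 < K := by
    rw [hK_def]
    exact div_pos (inv_pos.mpr (Real.sqrt_pos.mpr (by positivity))) hZNpos
  set γ : Measure ℝ := ProbabilityTheory.gaussianReal 0 (Real.toNNReal (2*J)⁻¹) with hγ_def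
  haveI hγprob : IsProbabilityMeasure γ := by rw [hγ_def]; infer_instance
  set ν : Measure ℝ := ∑ D ∈ dimerConfigs N,
      ENNReal.ofReal ((N : ℝ) ^ (-(D.card : ℤ)) * Real.exp (negH N h J D) / ZN) •
        Measure.dirac (monomerCount N D) with hν_def
  have hT : Measurable (fun p : ℝ × ℝ => p.1 / a + (p.2 - (N:ℝ)*u) / b) := by fun_prop
  have hmapaff : ∀ c : ℝ, Measure.map (fun x : ℝ => x / a + c) γ
      = ProbabilityTheory.gaussianReal c v' := by
    intro c
    have hcomp : (fun x : ℝ => x / a + c) = (fun y : ℝ => y + c) ∘ (fun x : ℝ => a⁻¹ * x) := by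
      funext x
      simp [Function.comp, div_eq_inv_mul]
    rw [hcomp, ← Measure.map_map (by fun_prop : Measurable fun y : ℝ => y + c)
        (by fun_prop : Measurable fun x : ℝ => a⁻¹ * x),
      hγ_def, ProbabilityTheory.gaussianReal_map_const_mul,
      ProbabilityTheory.gaussianReal_map_add_const, mul_zero, zero_add]
    congr 1
    apply NNReal.coe_injective
    rw [NNReal.coe_mul, NNReal.coe_mk, Real.coe_toNNReal _ (by positivity), hv'coe]
    field_simp
  have hmapD : ∀ s : ℝ,
      Measure.map (fun p : ℝ × ℝ => p.1 / a + (p.2 - (N:ℝ)*u) / b) (γ.prod (Measure.dirac s))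
        = volume.withDensity (ProbabilityTheory.gaussianPDF ((s - (N:ℝ)*u)/b) v') := by
    intro s
    rw [Measure.prod_dirac, Measure.map_map hT measurable_prodMk_right]
    have hfun : ((fun p : ℝ × ℝ => p.1 / a + (p.2 - (N:ℝ)*u) / b) ∘ fun x : ℝ => (x, s))
        = fun x : ℝ => x / a + (s - (N:ℝ)*u)/b := rfl
    rw [hfun, hmapaff, ProbabilityTheory.gaussianReal_of_var_ne_zero _ hv'ne]
  have hcD : ∀ s : ℝ, (s - (N:ℝ)*u)/b = e * (s/(N:ℝ) - u) := by
    intro s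
    rw [div_eq_iff hb.ne', show e * (s/(N:ℝ) - u) * b = (e*b) * (s/(N:ℝ) - u) by ring, heb]
    field_simp
  have h2v : 2*((2*J*a^2)⁻¹) = (J*a^2)⁻¹ := by
    field_simp
  have key : ∀ x : ℝ,
      ∑ D ∈ dimerConfigs N,
        ((N:ℝ) ^ (-(D.card : ℤ)) * Real.exp (negH N h J D) / ZN)
          * ProbabilityTheory.gaussianPDFReal ((monomerCount N D - (N:ℝ)*u)/b) v' x
      = K * Real.exp ((N:ℝ) * FN h J N (x/e + u)) := by
    intro x
    set m : ℝ := x / e + u with hm_def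
    rw [hexpFN, Z0, hK_def, Finset.mul_sum, Finset.mul_sum]
    refine Finset.sum_congr rfl fun D _ => ?_
    have hxc : x - (monomerCount N D - (N:ℝ)*u)/b = e * (m - monomerCount N D/(N:ℝ)) := by
      rw [hcD, hm_def]
      field_simp
      ring
    have hquad : (x - (monomerCount N D - (N:ℝ)*u)/b)^2 / (2*(v':ℝ))
        = J*(N:ℝ)*(m - monomerCount N D/(N:ℝ))^2 := by
      rw [hxc, hv'coe, h2v, div_eq_mul_inv, inv_inv]
      linear_combination J * (m - monomerCount N D/(N:ℝ))^2 * hea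
    have hnegH : negH N h J D = (N:ℝ)*((h-J)*(monomerCount N D/(N:ℝ))
        + J*(monomerCount N D/(N:ℝ))^2) := rfl
    have hEexp : negH N h J D + -((x - (monomerCount N D - (N:ℝ)*u)/b)^2 / (2*(v':ℝ)))
        = -(J*(N:ℝ))*m^2 + (2*J*m + h - J)*monomerCount N D := by
      rw [hnegH, hquad]
      field_simp
      ring
    have hE2 : Real.exp (negH N h J D)
          * Real.exp (-(x - (monomerCount N D - (N:ℝ)*u)/b)^2 / (2*(v':ℝ)))
        = Real.exp (-(J*(N:ℝ))*m^2) * Real.exp ((2*J*m + h - J)*monomerCount N D) := by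
      rw [← Real.exp_add, ← Real.exp_add]
      congr 1
      rw [neg_div]
      exact hEexp
    rw [ProbabilityTheory.gaussianPDFReal]
    linear_combination ((N:ℝ) ^ (-(D.card : ℤ)) * (Real.sqrt (2*π*(v':ℝ)))⁻¹ / ZN) * hE2
  have hdens : (fun x : ℝ => ∑ D ∈ dimerConfigs N,
      ENNReal.ofReal ((N:ℝ) ^ (-(D.card : ℤ)) * Real.exp (negH N h J D) / ZN)
        * ProbabilityTheory.gaussianPDF ((monomerCount N D - (N:ℝ)*u)/b) v' x)
      = fun x : ℝ => ENNReal.ofReal (K * Real.exp ((N:ℝ) * FN h J N (x/e + u))) := by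
    funext x
    rw [← key x, ENNReal.ofReal_sum_of_nonneg (fun D _ =>
      mul_nonneg (hwnn D) (ProbabilityTheory.gaussianPDFReal_nonneg _ _ _))]
    refine Finset.sum_congr rfl fun D _ => ?_
    rw [ProbabilityTheory.gaussianPDF, ENNReal.ofReal_mul (hwnn D)]
  have hM : Measure.map (fun p : ℝ × ℝ => p.1 / a + (p.2 - (N:ℝ)*u) / b) (γ.prod ν)
      = volume.withDensity
        (fun x : ℝ => ENNReal.ofReal (K * Real.exp ((N:ℝ) * FN h J N (x/e + u)))) := by
    rw [hν_def, IMDAux.prod_finsetSum γ (dimerConfigs N) _ (fun D => inferInstance),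
      IMDAux.map_finsetSum _ _ hT]
    rw [Finset.sum_congr rfl (fun D _ => by
      rw [IMDAux.prod_smul_right, Measure.map_smul, hmapD (monomerCount N D)])]
    rw [IMDAux.finsetSum_smul_withDensity volume (dimerConfigs N) _ _
      (fun D => ProbabilityTheory.measurable_gaussianPDF _ _), hdens]
  haveI hνprob : IsProbabilityMeasure ν := by
    constructor
    rw [hν_def, Measure.finset_sum_apply]
    simp only [Measure.smul_apply, smul_eq_mul, measure_univ, mul_one]
    rw [← ENNReal.ofReal_sum_of_nonneg (fun D _ => hwnn D)]
    have hsum : ∑ D ∈ dimerConfigs N, (N:ℝ) ^ (-(D.card : ℤ)) * Real.exp (negH N h J D) = ZN := by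
      rw [hZN_def, ZIMD]
    rw [← Finset.sum_div, hsum, div_self hZNpos.ne', ENNReal.ofReal_one]
  have hmap1 : Measure.map (fun p : ℝ × ℝ => p.1 / a + (p.2 - (N:ℝ)*u) / b) (γ.prod ν)
      Set.univ = 1 :=
    (Measure.isProbabilityMeasure_map hT.aemeasurable).measure_univ
  have hgmeas : Measurable (fun x : ℝ => Real.exp ((N:ℝ) * FN h J N (x/e + u))) := by
    have hZ0m : Measurable (Z0 N) := by
      have hz : Z0 N = fun t => ∑ D ∈ dimerConfigs N,
          (N:ℝ) ^ (-(D.card : ℤ)) * Real.exp (t * monomerCount N D) := rfl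
      rw [hz]
      exact Finset.measurable_sum _ fun D _ => ((measurable_id.mul_const _).exp.const_mul _)
    have hFNm : Measurable (FN h J N) := by
      have hf : FN h J N = fun y => -J * y^2 + (1/(N:ℝ)) * Real.log (Z0 N (2*J*y + h - J)) := rfl
      rw [hf]
      exact ((measurable_id.pow_const 2).const_mul (-J)).add
        ((Real.measurable_log.comp (hZ0m.comp (by fun_prop))).const_mul _)
    exact ((hFNm.comp (by fun_prop : Measurable fun x : ℝ => x / e + u)).const_mul _).exp
  rw [hM] at hmap1
  rw [withDensity_apply _ MeasurableSet.univ, Measure.restrict_univ] at hmap1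
  simp_rw [ENNReal.ofReal_mul hKpos.le] at hmap1
  rw [lintegral_const_mul _ hgmeas.ennreal_ofReal] at hmap1
  set I : ℝ≥0∞ := ∫⁻ x, ENNReal.ofReal (Real.exp ((N:ℝ) * FN h J N (x/e + u))) with hI_def
  have hIne : I ≠ ⊤ := by
    intro htop
    rw [htop, ENNReal.mul_top (fun h0 =>
      absurd (ENNReal.ofReal_eq_zero.mp h0) (not_le.mpr hKpos))] at hmap1
    exact ENNReal.top_ne_one hmap1
  have hIto : K * I.toReal = 1 := by
    have h2 := congrArg ENNReal.toReal hmap1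
    rwa [ENNReal.toReal_mul, ENNReal.toReal_ofReal hKpos.le, ENNReal.toReal_one] at h2
  have hint : ∫ x : ℝ, Real.exp ((N:ℝ) * FN h J N (x/e + u)) = I.toReal := by
    rw [integral_eq_lintegral_of_nonneg_ae (ae_of_all _ fun x => (Real.exp_pos _).le)
      hgmeas.aestronglyMeasurable, ← hI_def]
  have hCNK : CN = K := by
    rw [hCN, hint]
    exact (eq_inv_of_mul_eq_one_left hIto).symm
  rw [hCNK]
  exact hM


end
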